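/- Each step of the thresholding scheme is a minimizing movement: for any h > 0 and any measurable unit vector field u^{n-1} : 𝕋³ → 𝕊¹, the function u^n := (G_h∗u^{n-1})/|G_h∗u^{n-1}| minimizes the functional F(u) := E_h(u) + (1/h) ∫_{𝕋³} (u − u^{n-1}) · G_h∗(u − u^{n-1}) dx among all measurable u : 𝕋³ → ℝ² with |u| ≤ 1 a.e.; moreover any minimizer coincides a.e. with u^n on the set {x : (G_h∗u^{n-1})(x) ≠ 0}. -/

import Mathlib

open MeasureTheory Real Filter
open scoped RealInnerProductSpace Topology NNReal

noncomputable section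

abbrev Euc (d : ℕ) := EuclideanSpace ℝ (Fin d)

/-- The Gaussian heat kernel on ℝ^d at time `h`. -/
def heatKer (d : ℕ) (h : ℝ) (z : Euc d) : ℝ :=
  (4 * π * h) ^ (-(d : ℝ) / 2) * Real.exp (-‖z‖ ^ 2 / (4 * h))

/-- Convolution of the heat kernel with a function. -/
def heatConv {d : ℕ} {F : Type*} [NormedAddCommGroup F] [NormedSpace ℝ F]
    (h : ℝ) (u : Euc d → F) (x : Euc d) : F :=
  ∫ z : Euc d, heatKer d h z • u (x - z)

/-- Convolution of `∂ᵢ G_h` with a function. -/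
def heatConvD {d : ℕ} {F : Type*} [NormedAddCommGroup F] [NormedSpace ℝ F]
    (h : ℝ) (i : Fin d) (u : Euc d → F) (x : Euc d) : F :=
  ∫ z : Euc d, (fderiv ℝ (heatKer d h) z (EuclideanSpace.single i 1)) • u (x - z)

/-- Fundamental domain of the torus ℝ^d/ℤ^d. -/
def cube (d : ℕ) : Set (Euc d) := {x | ∀ i, 0 ≤ x i ∧ x i < 1}

/-- An integer vector, regarded as an element of ℝ^d. -/
def intVec {d : ℕ} (k : Fin d → ℤ) : Euc d := WithLp.toLp 2 (fun i => (k i : ℝ))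

/-- ℤ^d-periodicity. -/
def ZPeriodic {d : ℕ} {α : Type*} (u : Euc d → α) : Prop :=
  ∀ (x : Euc d) (k : Fin d → ℤ), u (x + intVec k) = u x

/-- The localized thresholding energy. -/
def EhLoc (h : ℝ) (u : Euc 3 → Euc 2) (ψ : Euc 3 → ℝ) : ℝ :=
  (1 / h) * ∫ x in cube 3, ψ x * (1 - ⟪u x, heatConv h u x⟫)

/-- The thresholding energy. -/
def Eh (h : ℝ) (u : Euc 3 → Euc 2) : ℝ :=
  (1 / h) * ∫ x in cube 3, (1 - ⟪u x, heatConv h u x⟫)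

/-- Squared Frobenius norm of a linear map between Euclidean spaces. -/
def frobSq {d m : ℕ} (L : Euc d →L[ℝ] Euc m) : ℝ :=
  ∑ i : Fin d, ∑ j : Fin m, (L (EuclideanSpace.single i 1) j) ^ 2

/-- One step of the thresholding scheme: diffusion followed by projection onto 𝕊¹. -/
def threshStep (h : ℝ) (u : Euc 3 → Euc 2) : Euc 3 → Euc 2 :=
  fun x => ‖heatConv h u x‖⁻¹ • heatConv h u x

/-- `Du` is the weak Jacobian of `u` on the torus. -/
def IsWeakJacobian {d m : ℕ} (u : Euc d → Euc m) (Du : Euc d → Euc d →L[ℝ] Euc m) : Prop :=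
  ∀ φ : Euc d → ℝ, ContDiff ℝ (⊤ : ℕ∞) φ → ZPeriodic φ →
    ∀ (i : Fin d) (j : Fin m),
      ∫ x in cube d, u x j * fderiv ℝ φ x (EuclideanSpace.single i 1)
        = - ∫ x in cube d, Du x (EuclideanSpace.single i 1) j * φ x

/-! ### Auxiliary development -/

open scoped Pointwise

section Aux

theorem integrable_rexp_neg_mul_sq_norm' {V : Type*} [NormedAddCommGroup V]
    [InnerProductSpace ℝ V] [FiniteDimensional ℝ V] [MeasurableSpace V] [BorelSpace V]
    {b : ℝ} (hb : 0 < b) :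
    Integrable (fun v : V => rexp (-b * ‖v‖ ^ 2)) := by
  have h := GaussianFourier.integrable_cexp_neg_mul_sq_norm_add (b := (b : ℂ))
    (by simpa using hb) 0 (0 : V)
  have h2 := h.norm
  simp only [Complex.norm_exp] at h2
  refine h2.congr (Filter.Eventually.of_forall fun v => ?_)
  norm_num
  norm_cast
  left
  rfl

lemma heatKer_pos {d : ℕ} {h : ℝ} (hh : 0 < h) (z : Euc d) : 0 < heatKer d h z := by
  unfold heatKer; positivity

lemma heatKer_nonneg {d : ℕ} {h : ℝ} (hh : 0 < h) (z : Euc d) : 0 ≤ heatKer d h z :=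
  (heatKer_pos hh z).le

lemma heatKer_neg_arg {d : ℕ} (h : ℝ) (z : Euc d) : heatKer d h (-z) = heatKer d h z := by
  simp [heatKer]

lemma heatKer_continuous {d : ℕ} (h : ℝ) : Continuous (heatKer d h) := by
  unfold heatKer
  fun_prop

lemma heatKer_integrable {d : ℕ} {h : ℝ} (hh : 0 < h) :
    Integrable (heatKer d h) := by
  unfold heatKer
  apply Integrable.const_mul
  have he : (fun z : Euc d => Real.exp (-‖z‖ ^ 2 / (4 * h)))
      = fun z : Euc d => Real.exp (-(1 / (4 * h)) * ‖z‖ ^ 2) := by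
    funext z; ring_nf
  rw [he]
  exact integrable_rexp_neg_mul_sq_norm' (by positivity)

/-- Standard basis of `Euc d`. -/
def stdB (d : ℕ) : Module.Basis (Fin d) ℝ (Euc d) := (EuclideanSpace.basisFun (Fin d) ℝ).toBasis

lemma stdB_repr {d : ℕ} (x : Euc d) (i : Fin d) : (stdB d).repr x i = x i := rfl

lemma cube_eq_fund (d : ℕ) : cube d = ZSpan.fundamentalDomain (stdB d) := by
  ext x; simp [cube, ZSpan.fundamentalDomain, stdB_repr, Set.mem_Ico]

lemma measurableSet_cube (d : ℕ) : MeasurableSet (cube d) :=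
  (cube_eq_fund d) ▸ ZSpan.fundamentalDomain_measurableSet (stdB d)

lemma volume_cube_lt_top (d : ℕ) : volume (cube d) < ⊤ := by
  have hsub : cube d ⊆ Metric.closedBall (0 : Euc d) (Real.sqrt d) := by
    intro x hx
    rw [Metric.mem_closedBall, dist_zero_right, EuclideanSpace.norm_eq]
    apply Real.sqrt_le_sqrt
    calc ∑ i, ‖x i‖ ^ 2 ≤ ∑ _i : Fin d, (1 : ℝ) := by
          apply Finset.sum_le_sum
          intro i _
          have h1 := (hx i).1
          have h2 := (hx i).2
          have : ‖x i‖ ≤ 1 := by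
            rw [Real.norm_eq_abs, abs_of_nonneg h1]; exact h2.le
          calc ‖x i‖ ^ 2 ≤ 1 ^ 2 := by
                apply pow_le_pow_left₀ (norm_nonneg _) this
            _ = 1 := one_pow 2
      _ = (d : ℝ) := by simp
  exact lt_of_le_of_lt (measure_mono hsub) (measure_closedBall_lt_top)

lemma fund (d : ℕ) :
    IsAddFundamentalDomain (Submodule.span ℤ (Set.range (stdB d))) (cube d) volume := by
  rw [cube_eq_fund]
  exact ZSpan.isAddFundamentalDomain (stdB d) volume

lemma latt_coe {d : ℕ} (g : Submodule.span ℤ (Set.range (stdB d))) :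
    ∃ k : Fin d → ℤ, (g : Euc d) = intVec k := by
  have hg := g.2
  rw [Module.Basis.mem_span_iff_repr_mem] at hg
  choose k hk using hg
  exact ⟨k, PiLp.ext fun i => by rw [← stdB_repr (g : Euc d) i, ← hk i]; rfl⟩

instance {d : ℕ} : VAddCommClass (Euc d) (Submodule.span ℤ (Set.range (stdB d))) (Euc d) :=
  ⟨fun a g x => by
    show a + ((g : Euc d) + x) = (g : Euc d) + (a + x)
    exact add_left_comm a _ x⟩

instance {d : ℕ} : MeasurableVAdd (Submodule.span ℤ (Set.range (stdB d))) (Euc d) :=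
  { measurable_const_vadd := fun _ => measurable_id.const_add _,
    measurable_vadd_const := fun x => (measurable_subtype_coe).add_const x }

instance {d : ℕ} : VAddInvariantMeasure (Submodule.span ℤ (Set.range (stdB d))) (Euc d) volume :=
  ⟨fun _ s _ => measure_preimage_add volume _ s⟩

lemma fund_vadd {d : ℕ} (z : Euc d) :
    IsAddFundamentalDomain (Submodule.span ℤ (Set.range (stdB d))) (z +ᵥ cube d) volume :=
  (fund d).vadd_of_comm z

/-- Integrals of periodic functions over the unit cube are translation invariant. -/
lemma setIntegral_cube_add {d : ℕ} {E : Type*} [NormedAddCommGroup E] [NormedSpace ℝ E]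
    (f : Euc d → E) (hper : ZPeriodic f) (z : Euc d) :
    ∫ x in cube d, f (x + z) = ∫ x in cube d, f x := by
  have hinv : ∀ (g : Submodule.span ℤ (Set.range (stdB d))) (x : Euc d), f (g +ᵥ x) = f x := by
    intro g x
    obtain ⟨k, hk⟩ := latt_coe g
    have hxk : g +ᵥ x = x + intVec k := by
      show (g : Euc d) + x = x + intVec k
      rw [hk, add_comm]
    rw [hxk, hper]
  have h1 : ∫ x in cube d, f (x + z) = ∫ x in z +ᵥ cube d, f x := by
    have hemb : MeasurableEmbedding (fun x : Euc d => z + x) :=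
      (MeasurableEquiv.addLeft z).measurableEmbedding
    have h2 := (measurePreserving_add_left (volume : Measure (Euc d)) z).setIntegral_image_emb
      hemb f (cube d)
    have h3 : z +ᵥ cube d = (fun x : Euc d => z + x) '' cube d := rfl
    rw [h3, h2]
    exact setIntegral_congr_fun (measurableSet_cube d) (fun x _ => by rw [add_comm])
  rw [h1]
  exact (fund_vadd z).setIntegral_eq (fund d) hinv


section HeatConv

variable {h : ℝ}

/-- Total mass of the heat kernel. -/
def cG (h : ℝ) : ℝ := ∫ z : Euc 3, heatKer 3 h z

lemma cG_nonneg (hh : 0 < h) : 0 ≤ cG h :=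
  integral_nonneg fun z => heatKer_nonneg hh z

lemma measurePreserving_const_sub' (x : Euc 3) :
    MeasurePreserving (fun z : Euc 3 => x - z) volume volume := by
  have := (measurePreserving_add_left (volume : Measure (Euc 3)) x).comp
    (Measure.measurePreserving_neg (volume : Measure (Euc 3)))
  simpa [Function.comp_def, sub_eq_add_neg] using this

lemma ae_norm_comp_sub_le {u : Euc 3 → Euc 2}
    (hub : ∀ᵐ y ∂(volume : Measure (Euc 3)), ‖u y‖ ≤ 1) (x : Euc 3) :
    ∀ᵐ z ∂(volume : Measure (Euc 3)), ‖u (x - z)‖ ≤ 1 :=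
  (measurePreserving_const_sub' x).quasiMeasurePreserving.ae hub

lemma integrable_heatConv_integrand (hh : 0 < h) {u : Euc 3 → Euc 2} (hu : Measurable u)
    (hub : ∀ᵐ y ∂(volume : Measure (Euc 3)), ‖u y‖ ≤ 1) (x : Euc 3) :
    Integrable (fun z => heatKer 3 h z • u (x - z)) := by
  apply Integrable.mono' (heatKer_integrable hh)
  · exact ((heatKer_continuous h).measurable.smul
      (hu.comp (measurable_const.sub measurable_id))).aestronglyMeasurable
  · filter_upwards [ae_norm_comp_sub_le hub x] with z hz
    rw [norm_smul, Real.norm_eq_abs, abs_of_nonneg (heatKer_nonneg hh z)]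
    calc heatKer 3 h z * ‖u (x - z)‖ ≤ heatKer 3 h z * 1 :=
          mul_le_mul_of_nonneg_left hz (heatKer_nonneg hh z)
      _ = heatKer 3 h z := mul_one _

lemma norm_heatConv_le (hh : 0 < h) {u : Euc 3 → Euc 2} (hu : Measurable u)
    (hub : ∀ᵐ y ∂(volume : Measure (Euc 3)), ‖u y‖ ≤ 1) (x : Euc 3) :
    ‖heatConv h u x‖ ≤ cG h := by
  rw [heatConv]
  calc ‖∫ z : Euc 3, heatKer 3 h z • u (x - z)‖
      ≤ ∫ z : Euc 3, ‖heatKer 3 h z • u (x - z)‖ := norm_integral_le_integral_norm _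
    _ ≤ ∫ z : Euc 3, heatKer 3 h z := by
        apply integral_mono_ae (integrable_heatConv_integrand hh hu hub x).norm
          (heatKer_integrable hh)
        filter_upwards [ae_norm_comp_sub_le hub x] with z hz
        rw [norm_smul, Real.norm_eq_abs, abs_of_nonneg (heatKer_nonneg hh z)]
        calc heatKer 3 h z * ‖u (x - z)‖ ≤ heatKer 3 h z * 1 :=
              mul_le_mul_of_nonneg_left hz (heatKer_nonneg hh z)
          _ = heatKer 3 h z := mul_one _

lemma heatConv_stronglyMeasurable {u : Euc 3 → Euc 2} (hu : Measurable u) :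
    StronglyMeasurable (heatConv h u) := by
  have hsm : StronglyMeasurable (fun p : Euc 3 × Euc 3 => heatKer 3 h p.2 • u (p.1 - p.2)) :=
    (((heatKer_continuous h).measurable.comp measurable_snd).smul
      (hu.comp (measurable_fst.sub measurable_snd))).stronglyMeasurable
  exact hsm.integral_prod_right'

lemma heatConv_periodic {u : Euc 3 → Euc 2} (hup : ZPeriodic u) :
    ZPeriodic (heatConv h u) := by
  intro x k
  unfold heatConv
  congr 1
  funext z
  have : x + intVec k - z = (x - z) + intVec k := by abel
  rw [this, hup]

lemma threshStep_measurable {u : Euc 3 → Euc 2} (hu : Measurable u) :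
    Measurable (threshStep h u) := by
  have hm : Measurable (heatConv h u) := (heatConv_stronglyMeasurable hu).measurable
  exact (hm.norm.inv).smul hm

lemma threshStep_periodic {u : Euc 3 → Euc 2} (hup : ZPeriodic u) :
    ZPeriodic (threshStep h u) := by
  intro x k
  unfold threshStep
  rw [heatConv_periodic hup]

lemma threshStep_norm_le (u : Euc 3 → Euc 2) (x : Euc 3) : ‖threshStep h u x‖ ≤ 1 := by
  unfold threshStep
  rcases eq_or_ne (heatConv h u x) 0 with h0 | h0
  · simp [h0]
  · rw [norm_smul, Real.norm_eq_abs, abs_of_nonneg (inv_nonneg.mpr (norm_nonneg _)),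
      inv_mul_cancel₀ (norm_ne_zero_iff.mpr h0)]

lemma inner_threshStep (u : Euc 3 → Euc 2) (x : Euc 3) :
    ⟪threshStep h u x, heatConv h u x⟫ = ‖heatConv h u x‖ := by
  unfold threshStep
  rcases eq_or_ne (heatConv h u x) 0 with h0 | h0
  · simp [h0]
  · rw [real_inner_smul_left, real_inner_self_eq_norm_sq]
    field_simp [norm_ne_zero_iff.mpr h0]

end HeatConv


section Cross

variable {h : ℝ}

lemma inner_heatConv_eq (hh : 0 < h) {u : Euc 3 → Euc 2} (hu : Measurable u)
    (hub : ∀ᵐ y ∂(volume : Measure (Euc 3)), ‖u y‖ ≤ 1) (v : Euc 3 → Euc 2) (x : Euc 3) :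
    ⟪v x, heatConv h u x⟫ = ∫ z : Euc 3, heatKer 3 h z * ⟪v x, u (x - z)⟫ := by
  rw [heatConv, ← integral_inner (integrable_heatConv_integrand hh hu hub x) (v x)]
  congr 1
  funext z
  rw [real_inner_smul_right]

lemma cross_integrable_prod (hh : 0 < h) {u v : Euc 3 → Euc 2}
    (hu : Measurable u) (hv : Measurable v)
    (hub : ∀ᵐ y ∂(volume : Measure (Euc 3)), ‖u y‖ ≤ 1)
    (hvb : ∀ᵐ y ∂(volume : Measure (Euc 3)), ‖v y‖ ≤ 1) :
    Integrable (Function.uncurry fun x z => heatKer 3 h z * ⟪v x, u (x - z)⟫)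
      (((volume : Measure (Euc 3)).restrict (cube 3)).prod (volume : Measure (Euc 3))) := by
  have hsm : StronglyMeasurable
      (fun p : Euc 3 × Euc 3 => heatKer 3 h p.2 * ⟪v p.1, u (p.1 - p.2)⟫) := by
    apply Measurable.stronglyMeasurable
    exact ((heatKer_continuous h).measurable.comp measurable_snd).mul
      ((hv.comp measurable_fst).inner (hu.comp (measurable_fst.sub measurable_snd)))
  apply Integrable.mono' (g := fun p : Euc 3 × Euc 3 => heatKer 3 h p.2)
  · have h1 : Integrable (fun _ : Euc 3 => (1 : ℝ))
        ((volume : Measure (Euc 3)).restrict (cube 3)) := by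
      exact integrableOn_const (volume_cube_lt_top 3).ne
    have := h1.mul_prod (heatKer_integrable hh (d := 3))
    simpa using this
  · exact hsm.aestronglyMeasurable
  · -- a.e. bound
    have E1 : ∀ᵐ p : Euc 3 × Euc 3
        ∂(((volume : Measure (Euc 3)).restrict (cube 3)).prod volume), ‖v p.1‖ ≤ 1 := by
      rw [ae_iff]
      have hsub : {p : Euc 3 × Euc 3 | ¬ ‖v p.1‖ ≤ 1}
          ⊆ {y : Euc 3 | ¬ ‖v y‖ ≤ 1} ×ˢ (Set.univ : Set (Euc 3)) := by
        intro p hp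
        exact Set.mk_mem_prod hp (Set.mem_univ _)
      apply measure_mono_null hsub
      rw [Measure.prod_prod]
      have hz : (volume : Measure (Euc 3)).restrict (cube 3) {y : Euc 3 | ¬ ‖v y‖ ≤ 1} = 0 := by
        apply le_antisymm _ (zero_le')
        calc (volume : Measure (Euc 3)).restrict (cube 3) {y | ¬ ‖v y‖ ≤ 1}
            ≤ volume {y | ¬ ‖v y‖ ≤ 1} := Measure.restrict_le_self _
          _ = 0 := by rw [← ae_iff] ; exact hvb
      rw [hz, zero_mul]
    have E2 : ∀ᵐ p : Euc 3 × Euc 3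
        ∂(((volume : Measure (Euc 3)).restrict (cube 3)).prod volume), ‖u (p.1 - p.2)‖ ≤ 1 := by
      rw [ae_iff]
      have hms : MeasurableSet {p : Euc 3 × Euc 3 | ¬ ‖u (p.1 - p.2)‖ ≤ 1} := by
        have : Measurable (fun p : Euc 3 × Euc 3 => ‖u (p.1 - p.2)‖) :=
          (hu.comp (measurable_fst.sub measurable_snd)).norm
        simp only [not_le]
        exact (measurableSet_lt measurable_const this)
      rw [Measure.measure_prod_null hms]
      apply Filter.Eventually.of_forall
      intro x
      show volume (Prod.mk x ⁻¹' {p : Euc 3 × Euc 3 | ¬ ‖u (p.1 - p.2)‖ ≤ 1}) = (0 : _)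
      have hpre : Prod.mk x ⁻¹' {p : Euc 3 × Euc 3 | ¬ ‖u (p.1 - p.2)‖ ≤ 1}
          = (fun z : Euc 3 => x - z) ⁻¹' {y : Euc 3 | ¬ ‖u y‖ ≤ 1} := rfl
      rw [hpre, (measurePreserving_const_sub' x).measure_preimage]
      · rw [← ae_iff]; exact hub
      · have hm2 : Measurable (fun y : Euc 3 => ‖u y‖) := hu.norm
        have : MeasurableSet {y : Euc 3 | ¬ ‖u y‖ ≤ 1} := by
          simp only [not_le]
          exact measurableSet_lt measurable_const hm2
        exact this.nullMeasurableSet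
    filter_upwards [E1, E2] with p h1 h2
    simp only [Function.uncurry]
    rw [Real.norm_eq_abs, abs_mul, abs_of_nonneg (heatKer_nonneg hh p.2)]
    calc heatKer 3 h p.2 * |⟪v p.1, u (p.1 - p.2)⟫|
        ≤ heatKer 3 h p.2 * (‖v p.1‖ * ‖u (p.1 - p.2)‖) :=
          mul_le_mul_of_nonneg_left (abs_real_inner_le_norm _ _) (heatKer_nonneg hh p.2)
      _ ≤ heatKer 3 h p.2 * 1 := by
          apply mul_le_mul_of_nonneg_left _ (heatKer_nonneg hh p.2)
          exact mul_le_one₀ h1 (norm_nonneg _) h2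
      _ = heatKer 3 h p.2 := by ring

lemma cross_eq (hh : 0 < h) {u v : Euc 3 → Euc 2}
    (hu : Measurable u) (hv : Measurable v)
    (hub : ∀ᵐ y ∂(volume : Measure (Euc 3)), ‖u y‖ ≤ 1)
    (hvb : ∀ᵐ y ∂(volume : Measure (Euc 3)), ‖v y‖ ≤ 1) :
    ∫ x in cube 3, ⟪v x, heatConv h u x⟫ =
      ∫ z : Euc 3, heatKer 3 h z * ∫ x in cube 3, ⟪v x, u (x - z)⟫ := by
  have h1 : ∫ x in cube 3, ⟪v x, heatConv h u x⟫
      = ∫ x in cube 3, ∫ z : Euc 3, heatKer 3 h z * ⟪v x, u (x - z)⟫ := by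
    apply integral_congr_ae
    exact Filter.Eventually.of_forall fun x => inner_heatConv_eq hh hu hub v x
  rw [h1, integral_integral_swap (cross_integrable_prod hh hu hv hub hvb)]
  congr 1
  funext z
  rw [integral_const_mul]

end Cross

section Symm

variable {h : ℝ}

lemma cross_symm (hh : 0 < h) {u v : Euc 3 → Euc 2}
    (hu : Measurable u) (hv : Measurable v) (hup : ZPeriodic u) (hvp : ZPeriodic v)
    (hub : ∀ᵐ y ∂(volume : Measure (Euc 3)), ‖u y‖ ≤ 1)
    (hvb : ∀ᵐ y ∂(volume : Measure (Euc 3)), ‖v y‖ ≤ 1) :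
    ∫ x in cube 3, ⟪v x, heatConv h u x⟫ = ∫ x in cube 3, ⟪u x, heatConv h v x⟫ := by
  rw [cross_eq hh hu hv hub hvb, cross_eq hh hv hu hvb hub]
  have key : ∀ z : Euc 3, (∫ x in cube 3, ⟪v x, u (x - z)⟫)
      = ∫ x in cube 3, ⟪u x, v (x + z)⟫ := by
    intro z
    have hper : ZPeriodic (fun y : Euc 3 => ⟪u y, v (y + z)⟫) := by
      intro y k
      have h1 : y + intVec k + z = (y + z) + intVec k := by abel
      simp only [h1, hup y k, hvp (y + z) k]
    have h2 := setIntegral_cube_add (fun y : Euc 3 => ⟪u y, v (y + z)⟫) hper (-z)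
    calc (∫ x in cube 3, ⟪v x, u (x - z)⟫)
        = ∫ x in cube 3, ⟪u (x + -z), v (x + -z + z)⟫ := by
          apply setIntegral_congr_fun (measurableSet_cube 3)
          intro x _
          show ⟪v x, u (x - z)⟫ = ⟪u (x + -z), v (x + -z + z)⟫
          have e1 : x + -z = x - z := by abel
          have e2 : x - z + z = x := by abel
          rw [e1, e2, real_inner_comm]
      _ = ∫ x in cube 3, ⟪u x, v (x + z)⟫ := h2
  conv_rhs => rw [← integral_neg_eq_self
    (fun z : Euc 3 => heatKer 3 h z * ∫ x in cube 3, ⟪u x, v (x - z)⟫) volume]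
  congr 1
  funext z
  rw [heatKer_neg_arg, key z]
  congr 1
  apply setIntegral_congr_fun (measurableSet_cube 3)
  intro x _
  show ⟪u x, v (x + z)⟫ = ⟪u x, v (x - -z)⟫
  rw [sub_neg_eq_add]

end Symm

section Energy

variable {h : ℝ}

lemma integrableOn_inner_heatConv (hh : 0 < h) {u v : Euc 3 → Euc 2}
    (hu : Measurable u) (hv : Measurable v)
    (hub : ∀ᵐ y ∂(volume : Measure (Euc 3)), ‖u y‖ ≤ 1)
    (hvb : ∀ᵐ y ∂(volume : Measure (Euc 3)), ‖v y‖ ≤ 1) :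
    IntegrableOn (fun x => ⟪v x, heatConv h u x⟫) (cube 3) := by
  apply Integrable.mono' (g := fun _ : Euc 3 => cG h)
    (integrableOn_const (volume_cube_lt_top 3).ne)
  · exact (hv.inner (heatConv_stronglyMeasurable hu).measurable).aestronglyMeasurable
  · filter_upwards [ae_restrict_of_ae hvb] with x hx
    rw [Real.norm_eq_abs]
    calc |⟪v x, heatConv h u x⟫| ≤ ‖v x‖ * ‖heatConv h u x‖ := abs_real_inner_le_norm _ _
      _ ≤ 1 * cG h := by
          apply mul_le_mul hx (norm_heatConv_le hh hu hub x) (norm_nonneg _) zero_le_one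
      _ = cG h := one_mul _

lemma integrableOn_norm_heatConv (hh : 0 < h) {u : Euc 3 → Euc 2}
    (hu : Measurable u)
    (hub : ∀ᵐ y ∂(volume : Measure (Euc 3)), ‖u y‖ ≤ 1) :
    IntegrableOn (fun x => ‖heatConv h u x‖) (cube 3) := by
  apply Integrable.mono' (g := fun _ : Euc 3 => cG h)
    (integrableOn_const (volume_cube_lt_top 3).ne)
  · exact (heatConv_stronglyMeasurable hu).measurable.norm.aestronglyMeasurable
  · apply Filter.Eventually.of_forall
    intro x
    rw [norm_norm]
    exact norm_heatConv_le hh hu hub x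

lemma heatConv_sub (hh : 0 < h) {u v : Euc 3 → Euc 2}
    (hu : Measurable u) (hv : Measurable v)
    (hub : ∀ᵐ y ∂(volume : Measure (Euc 3)), ‖u y‖ ≤ 1)
    (hvb : ∀ᵐ y ∂(volume : Measure (Euc 3)), ‖v y‖ ≤ 1) (x : Euc 3) :
    heatConv h (fun y => u y - v y) x = heatConv h u x - heatConv h v x := by
  unfold heatConv
  rw [← integral_sub (integrable_heatConv_integrand hh hu hub x)
    (integrable_heatConv_integrand hh hv hvb x)]
  congr 1
  funext z
  rw [smul_sub]

/-- The key representation of the one-step functional. -/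
lemma Fh_repr (hh : 0 < h) {uprev u : Euc 3 → Euc 2}
    (humeas : Measurable uprev) (huper : ZPeriodic uprev) (huunit : ∀ x, ‖uprev x‖ = 1)
    (hu : Measurable u) (hup : ZPeriodic u)
    (hub : ∀ᵐ y ∂(volume : Measure (Euc 3)), ‖u y‖ ≤ 1) :
    Eh h u + (1 / h) * ∫ x in cube 3,
        ⟪u x - uprev x, heatConv h (fun y => u y - uprev y) x⟫
      = (1 / h) * ((((volume : Measure (Euc 3)) (cube 3)).toReal
            + ∫ x in cube 3, ⟪uprev x, heatConv h uprev x⟫)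
          - 2 * ∫ x in cube 3, ⟪u x, heatConv h uprev x⟫) := by
  have hpb : ∀ᵐ y ∂(volume : Measure (Euc 3)), ‖uprev y‖ ≤ 1 :=
    Filter.Eventually.of_forall fun y => (huunit y).le
  -- the four basic integrands are integrable on the cube
  have Iuu := integrableOn_inner_heatConv hh hu hu hub hub
  have Iuc := integrableOn_inner_heatConv hh humeas hu hpb hub
  have Ipu := integrableOn_inner_heatConv hh hu humeas hub hpb
  have Ipc := integrableOn_inner_heatConv hh humeas humeas hpb hpb
  -- rewrite the penalization integrand
  have hP : ∀ x, ⟪u x - uprev x, heatConv h (fun y => u y - uprev y) x⟫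
      = ⟪u x, heatConv h u x⟫ - ⟪u x, heatConv h uprev x⟫
        - ⟪uprev x, heatConv h u x⟫ + ⟪uprev x, heatConv h uprev x⟫ := by
    intro x
    rw [heatConv_sub hh hu humeas hub hpb x, inner_sub_left, inner_sub_right, inner_sub_right]
    ring
  have hP2 : ∫ x in cube 3, ⟪u x - uprev x, heatConv h (fun y => u y - uprev y) x⟫
      = (∫ x in cube 3, ⟪u x, heatConv h u x⟫) - (∫ x in cube 3, ⟪u x, heatConv h uprev x⟫)
        - (∫ x in cube 3, ⟪uprev x, heatConv h u x⟫)
        + ∫ x in cube 3, ⟪uprev x, heatConv h uprev x⟫ := by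
    have e : ∫ x in cube 3, ⟪u x - uprev x, heatConv h (fun y => u y - uprev y) x⟫
        = ∫ x in cube 3, (⟪u x, heatConv h u x⟫ - ⟪u x, heatConv h uprev x⟫
          - ⟪uprev x, heatConv h u x⟫ + ⟪uprev x, heatConv h uprev x⟫) :=
      setIntegral_congr_fun (measurableSet_cube 3) (fun x _ => hP x)
    have I12 : IntegrableOn (fun x => ⟪u x, heatConv h u x⟫ - ⟪u x, heatConv h uprev x⟫)
        (cube 3) := Iuu.sub Iuc
    have I123 : IntegrableOn (fun x => ⟪u x, heatConv h u x⟫ - ⟪u x, heatConv h uprev x⟫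
        - ⟪uprev x, heatConv h u x⟫) (cube 3) := I12.sub Ipu
    rw [e, integral_add I123 Ipc, integral_sub I12 Ipu, integral_sub Iuu Iuc]
  have hE : Eh h u = (1 / h) * ((((volume : Measure (Euc 3)) (cube 3)).toReal
      - ∫ x in cube 3, ⟪u x, heatConv h u x⟫)) := by
    rw [Eh]
    congr 1
    rw [integral_sub (integrableOn_const (C := (1 : ℝ)) (volume_cube_lt_top 3).ne) Iuu,
      setIntegral_const]
    simp [measureReal_def]
  have hsymm : ∫ x in cube 3, ⟪uprev x, heatConv h u x⟫
      = ∫ x in cube 3, ⟪u x, heatConv h uprev x⟫ :=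
    cross_symm hh hu humeas hup huper hub hpb
  rw [hE, hP2, hsymm]
  ring

end Energy

/-- One step of the thresholding scheme is a minimizing movement, and any other
minimizer agrees a.e. with the thresholding step wherever the diffused field does not vanish. -/
theorem thresholding_is_minimizing_movement
    (h : ℝ) (hh : 0 < h) (uprev : Euc 3 → Euc 2)
    (humeas : Measurable uprev) (huper : ZPeriodic uprev) (huunit : ∀ x, ‖uprev x‖ = 1) :
    (∀ u : Euc 3 → Euc 2, Measurable u → ZPeriodic u →
        (∀ᵐ x ∂(volume : Measure (Euc 3)), ‖u x‖ ≤ 1) →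
        Eh h (threshStep h uprev) + (1 / h) * ∫ x in cube 3,
            ⟪threshStep h uprev x - uprev x,
              heatConv h (fun y => threshStep h uprev y - uprev y) x⟫
          ≤ Eh h u + (1 / h) * ∫ x in cube 3,
            ⟪u x - uprev x, heatConv h (fun y => u y - uprev y) x⟫) ∧
    (∀ u : Euc 3 → Euc 2, Measurable u → ZPeriodic u →
        (∀ᵐ x ∂(volume : Measure (Euc 3)), ‖u x‖ ≤ 1) →
        (∀ v : Euc 3 → Euc 2, Measurable v → ZPeriodic v →
            (∀ᵐ x ∂(volume : Measure (Euc 3)), ‖v x‖ ≤ 1) →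
            Eh h u + (1 / h) * ∫ x in cube 3,
                ⟪u x - uprev x, heatConv h (fun y => u y - uprev y) x⟫
              ≤ Eh h v + (1 / h) * ∫ x in cube 3,
                ⟪v x - uprev x, heatConv h (fun y => v y - uprev y) x⟫) →
        ∀ᵐ x ∂(volume : Measure (Euc 3)),
          heatConv h uprev x ≠ 0 → u x = threshStep h uprev x) := by
  have hpb : ∀ᵐ y ∂(volume : Measure (Euc 3)), ‖uprev y‖ ≤ 1 :=
    Filter.Eventually.of_forall fun y => (huunit y).le
  have htm : Measurable (threshStep h uprev) := threshStep_measurable humeas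
  have htp : ZPeriodic (threshStep h uprev) := threshStep_periodic huper
  have htb : ∀ᵐ x ∂(volume : Measure (Euc 3)), ‖threshStep h uprev x‖ ≤ 1 :=
    Filter.Eventually.of_forall (threshStep_norm_le uprev)
  have hInt_t : ∫ x in cube 3, ⟪threshStep h uprev x, heatConv h uprev x⟫
      = ∫ x in cube 3, ‖heatConv h uprev x‖ :=
    setIntegral_congr_fun (measurableSet_cube 3) (fun x _ => inner_threshStep uprev x)
  -- the linear term is maximized by the thresholding step
  have key : ∀ u : Euc 3 → Euc 2, Measurable u →
      (∀ᵐ x ∂(volume : Measure (Euc 3)), ‖u x‖ ≤ 1) →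
      ∫ x in cube 3, ⟪u x, heatConv h uprev x⟫
        ≤ ∫ x in cube 3, ⟪threshStep h uprev x, heatConv h uprev x⟫ := by
    intro u hu hub
    rw [hInt_t]
    apply integral_mono_ae (integrableOn_inner_heatConv hh humeas hu hpb hub)
      (integrableOn_norm_heatConv hh humeas hpb)
    filter_upwards [ae_restrict_of_ae hub] with x hx
    calc ⟪u x, heatConv h uprev x⟫ ≤ ‖u x‖ * ‖heatConv h uprev x‖ := real_inner_le_norm _ _
      _ ≤ 1 * ‖heatConv h uprev x‖ := mul_le_mul_of_nonneg_right hx (norm_nonneg _)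
      _ = ‖heatConv h uprev x‖ := one_mul _
  have main1 : ∀ u : Euc 3 → Euc 2, Measurable u → ZPeriodic u →
      (∀ᵐ x ∂(volume : Measure (Euc 3)), ‖u x‖ ≤ 1) →
      Eh h (threshStep h uprev) + (1 / h) * ∫ x in cube 3,
          ⟪threshStep h uprev x - uprev x,
            heatConv h (fun y => threshStep h uprev y - uprev y) x⟫
        ≤ Eh h u + (1 / h) * ∫ x in cube 3,
          ⟪u x - uprev x, heatConv h (fun y => u y - uprev y) x⟫ := by
    intro u hu hup hub
    rw [Fh_repr hh humeas huper huunit hu hup hub,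
      Fh_repr hh humeas huper huunit htm htp htb]
    apply mul_le_mul_of_nonneg_left _ (le_of_lt (one_div_pos.mpr hh))
    have := key u hu hub
    linarith
  refine ⟨main1, ?_⟩
  intro u hu hup hub hmin
  have h1 := hmin (threshStep h uprev) htm htp htb
  have h2 := main1 u hu hup hub
  -- equality of the linear terms
  have heq : ∫ x in cube 3, ⟪u x, heatConv h uprev x⟫
      = ∫ x in cube 3, ‖heatConv h uprev x‖ := by
    rw [Fh_repr hh humeas huper huunit hu hup hub,
      Fh_repr hh humeas huper huunit htm htp htb] at h1 h2
    have h3 := le_antisymm h1 h2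
    have h4 := mul_left_cancel₀ (one_div_ne_zero hh.ne') h3
    have h5 : ∫ x in cube 3, ⟪u x, heatConv h uprev x⟫
        = ∫ x in cube 3, ⟪threshStep h uprev x, heatConv h uprev x⟫ := by linarith
    rw [h5, hInt_t]
  -- a.e. on the cube the inner product saturates
  have hae0 : (fun x => ‖heatConv h uprev x‖ - ⟪u x, heatConv h uprev x⟫)
      =ᵐ[(volume : Measure (Euc 3)).restrict (cube 3)] 0 := by
    have hnn : 0 ≤ᵐ[(volume : Measure (Euc 3)).restrict (cube 3)]
        (fun x => ‖heatConv h uprev x‖ - ⟪u x, heatConv h uprev x⟫) := by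
      filter_upwards [ae_restrict_of_ae hub] with x hx
      have : ⟪u x, heatConv h uprev x⟫ ≤ ‖heatConv h uprev x‖ := by
        calc ⟪u x, heatConv h uprev x⟫ ≤ ‖u x‖ * ‖heatConv h uprev x‖ := real_inner_le_norm _ _
          _ ≤ 1 * ‖heatConv h uprev x‖ := mul_le_mul_of_nonneg_right hx (norm_nonneg _)
          _ = ‖heatConv h uprev x‖ := one_mul _
      simp only [Pi.zero_apply]
      linarith
    have hint : IntegrableOn
        (fun x => ‖heatConv h uprev x‖ - ⟪u x, heatConv h uprev x⟫) (cube 3) :=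
      (integrableOn_norm_heatConv hh humeas hpb).sub
        (integrableOn_inner_heatConv hh humeas hu hpb hub)
    have hzero : ∫ x in cube 3, (‖heatConv h uprev x‖ - ⟪u x, heatConv h uprev x⟫) = 0 := by
      rw [integral_sub (integrableOn_norm_heatConv hh humeas hpb)
        (integrableOn_inner_heatConv hh humeas hu hpb hub), heq]
      ring
    exact (integral_eq_zero_iff_of_nonneg_ae hnn hint).mp hzero
  have hae1 : ∀ᵐ x ∂(volume : Measure (Euc 3)), x ∈ cube 3 →
      ⟪u x, heatConv h uprev x⟫ = ‖heatConv h uprev x‖ := by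
    rw [← ae_restrict_iff' (measurableSet_cube 3)]
    filter_upwards [hae0] with x hx
    simp only [Pi.zero_apply] at hx
    linarith
  -- the bad set
  set A : Set (Euc 3) := {x | heatConv h uprev x ≠ 0 ∧ u x ≠ threshStep h uprev x} with hA
  -- the bad set is null on the cube
  have hAcube : volume (A ∩ cube 3) = 0 := by
    have hS : volume {x : Euc 3 | ¬ ((x ∈ cube 3 →
        ⟪u x, heatConv h uprev x⟫ = ‖heatConv h uprev x‖) ∧ ‖u x‖ ≤ 1)} = 0 := by
      rw [← ae_iff]
      filter_upwards [hae1, hub] with x h1 h2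
      exact ⟨h1, h2⟩
    apply measure_mono_null _ hS
    rintro x ⟨⟨hcne, hune⟩, hxc⟩
    intro hgood
    apply hune
    have hinner := hgood.1 hxc
    have hnorm := hgood.2
    have hpos : (0 : ℝ) < ‖heatConv h uprev x‖ := norm_pos_iff.mpr hcne
    have hle1 : ‖heatConv h uprev x‖ ≤ ‖u x‖ * ‖heatConv h uprev x‖ :=
      hinner ▸ real_inner_le_norm (u x) (heatConv h uprev x)
    have hge : (1 : ℝ) ≤ ‖u x‖ := by nlinarith
    have hn1 : ‖u x‖ = 1 := le_antisymm hnorm hge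
    have hprod : ⟪u x, heatConv h uprev x⟫ = ‖u x‖ * ‖heatConv h uprev x‖ := by
      rw [hn1, one_mul, hinner]
    have h5 := inner_eq_norm_mul_iff_real.mp hprod
    rw [hn1, one_smul] at h5
    have h6 : u x = ‖heatConv h uprev x‖⁻¹ • (‖heatConv h uprev x‖ • u x) := by
      rw [smul_smul, inv_mul_cancel₀ hpos.ne', one_smul]
    rw [threshStep]
    rw [h6, h5]
  -- the bad set is periodic
  have hAper : ∀ (x : Euc 3) (k : Fin 3 → ℤ), x + intVec k ∈ A ↔ x ∈ A := by
    intro x k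
    have e1 : heatConv h uprev (x + intVec k) = heatConv h uprev x := heatConv_periodic huper x k
    have e2 : u (x + intVec k) = u x := hup x k
    have e3 : threshStep h uprev (x + intVec k) = threshStep h uprev x := htp x k
    simp only [hA, Set.mem_setOf_eq, e1, e2, e3]
  -- translates of the bad set on translated cubes are null
  have htrans : ∀ k : Fin 3 → ℤ, volume (A ∩ (intVec k +ᵥ cube 3)) = 0 := by
    intro k
    have hset : A ∩ (intVec k +ᵥ cube 3) = intVec k +ᵥ (A ∩ cube 3) := by
      ext y
      constructor
      · rintro ⟨hyA, hyc⟩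
        obtain ⟨z, hz, rfl⟩ := hyc
        refine ⟨z, ⟨?_, hz⟩, rfl⟩
        apply (hAper z k).mp
        show z + intVec k ∈ A
        rw [add_comm]
        exact hyA
      · rintro ⟨z, ⟨hzA, hzc⟩, rfl⟩
        constructor
        · show intVec k + z ∈ A
          rw [add_comm]
          exact (hAper z k).mpr hzA
        · exact ⟨z, hzc, rfl⟩
    rw [hset]
    have hAmeas : MeasurableSet (A ∩ cube 3) := by
      apply MeasurableSet.inter _ (measurableSet_cube 3)
      have hm : Measurable (heatConv h uprev) := (heatConv_stronglyMeasurable humeas).measurable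
      have m1 : MeasurableSet {x : Euc 3 | heatConv h uprev x ≠ 0} := by
        have e : {x : Euc 3 | heatConv h uprev x ≠ 0}
            = {x : Euc 3 | heatConv h uprev x = 0}ᶜ := rfl
        rw [e]
        exact (measurableSet_eq_fun hm measurable_const).compl
      have m2 : MeasurableSet {x : Euc 3 | u x ≠ threshStep h uprev x} := by
        have e : {x : Euc 3 | u x ≠ threshStep h uprev x}
            = {x : Euc 3 | u x = threshStep h uprev x}ᶜ := rfl
        rw [e]
        exact (measurableSet_eq_fun hu htm).compl
      exact m1.inter m2
    have hpre : intVec k +ᵥ (A ∩ cube 3)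
        = (fun y : Euc 3 => -intVec k + y) ⁻¹' (A ∩ cube 3) := by
      ext y
      constructor
      · rintro ⟨z, hz, rfl⟩
        show -intVec k + (intVec k + z) ∈ A ∩ cube 3
        have : -intVec k + (intVec k + z) = z := by abel
        rwa [this]
      · intro hy
        refine ⟨-intVec k + y, hy, ?_⟩
        show intVec k + (-intVec k + y) = y
        abel
    rw [hpre, (measurePreserving_add_left (volume : Measure (Euc 3))
      (-intVec k)).measure_preimage hAmeas.nullMeasurableSet, hAcube]
  -- the cube translates cover everything
  have hcover : A ⊆ ⋃ k : Fin 3 → ℤ, (A ∩ (intVec k +ᵥ cube 3)) := by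
    intro x hx
    refine Set.mem_iUnion.mpr ⟨fun i => ⌊x i⌋, hx, ?_⟩
    refine ⟨x - intVec (fun i => ⌊x i⌋), ?_, by
      show intVec (fun i => ⌊x i⌋) + (x - intVec (fun i => ⌊x i⌋)) = x
      abel⟩
    intro i
    have hxi : (x - intVec (fun i => ⌊x i⌋)) i = x i - (⌊x i⌋ : ℝ) := by simp [intVec]
    rw [hxi]
    constructor
    · have := Int.floor_le (x i); linarith
    · have := Int.lt_floor_add_one (x i); linarith
  have hA0 : volume A = 0 := by
    apply measure_mono_null hcover
    exact measure_iUnion_null htrans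
  rw [ae_iff]
  apply measure_mono_null _ hA0
  intro x hx
  simp only [Set.mem_setOf_eq, not_forall] at hx
  exact ⟨hx.1, hx.2⟩
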